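/- Let Q > 0, η > 0 with η ≤ Q, and let 0 = f₁ ≤ f₂ ≤ ... ≤ f_k ≤ Q - η and f_{k+1} = Q be a nondecreasing sequence of reals. Then ∑_{i=1}^{k} (f_{i+1} - f_i)/(Q - f_i) ≤ ln(Q/η) + 1. -/

import Mathlib

lemma step_bound (Q a b : ℝ) (hab : a ≤ b) (hb : b < Q) :
    (b - a) / (Q - a) ≤ Real.log (Q - a) - Real.log (Q - b) := by
  have ha : 0 < Q - a := by linarith
  have hbQ : 0 < Q - b := by linarith
  have h := Real.log_le_sub_one_of_pos (x := (Q - b) / (Q - a)) (by positivity)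
  rw [Real.log_div (by linarith) (by linarith)] at h
  have h2 : (Q - b) / (Q - a) - 1 = (a - b) / (Q - a) := by field_simp; ring
  rw [h2] at h
  have : (a - b) / (Q - a) = -((b - a) / (Q - a)) := by ring
  linarith [h, this ▸ h]

/-- Harmonic-sum bound: for `0 = f 1 ≤ f 2 ≤ ... ≤ f k ≤ Q - η` and `f (k+1) = Q`,
`∑_{i=1}^{k} (f_{i+1} - f_i)/(Q - f_i) ≤ ln(Q/η) + 1`. -/
theorem stmt_1 (Q η : ℝ) (hQ : 0 < Q) (hη : 0 < η) (hηQ : η ≤ Q)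
    (k : ℕ) (hk : 1 ≤ k) (f : ℕ → ℝ) (h1 : f 1 = 0)
    (hmono : ∀ i, 1 ≤ i → i ≤ k → f i ≤ f (i + 1))
    (hklast : f k ≤ Q - η) (hlast : f (k + 1) = Q) :
    ∑ i ∈ Finset.Icc 1 k, (f (i + 1) - f i) / (Q - f i) ≤ Real.log (Q / η) + 1 := by
  -- monotonicity up to k
  have hmono2 : ∀ i j, 1 ≤ i → i ≤ j → j ≤ k → f i ≤ f j := by
    intro i j hi hij hjk
    induction j with
    | zero => omega
    | succ n ih =>
      rcases Nat.eq_or_lt_of_le hij with h | h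
      · rw [h]
      · have hn : i ≤ n := by omega
        have h1n : 1 ≤ n := le_trans hi hn
        exact le_trans (ih hn (by omega)) (hmono n h1n (by omega))
  obtain ⟨m, rfl⟩ : ∃ m, k = m + 1 := ⟨k - 1, by omega⟩
  rw [Finset.sum_Icc_succ_top (by omega)]
  have hlastterm : (f (m + 1 + 1) - f (m + 1)) / (Q - f (m + 1)) = 1 := by
    rw [hlast]
    have : Q - f (m + 1) ≠ 0 := by
      have := hklast; intro h; nlinarith
    field_simp
  rw [hlastterm]
  have hmain : ∑ i ∈ Finset.Icc 1 m, (f (i + 1) - f i) / (Q - f i)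
      ≤ Real.log (Q / η) := by
    have hstep : ∀ i ∈ Finset.Icc 1 m, (f (i + 1) - f i) / (Q - f i)
        ≤ Real.log (Q - f i) - Real.log (Q - f (i + 1)) := by
      intro i hi
      simp only [Finset.mem_Icc] at hi
      apply step_bound
      · exact hmono i hi.1 (by omega)
      · have : f (i + 1) ≤ f (m + 1) := hmono2 (i+1) (m+1) (by omega) (by omega) le_rfl
        linarith
    calc ∑ i ∈ Finset.Icc 1 m, (f (i + 1) - f i) / (Q - f i)
        ≤ ∑ i ∈ Finset.Icc 1 m, (Real.log (Q - f i) - Real.log (Q - f (i + 1))) :=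
          Finset.sum_le_sum hstep
      _ = Real.log (Q - f 1) - Real.log (Q - f (m + 1)) := by
          rw [show Finset.Icc 1 m = Finset.Ico 1 (m + 1) by rfl,
            Finset.sum_Ico_eq_sum_range]
          simp only [Nat.add_sub_cancel]
          have := Finset.sum_range_sub' (fun i => Real.log (Q - f (i + 1))) m
          convert this using 2 <;> ring_nf
      _ ≤ Real.log (Q / η) := by
          rw [h1, sub_zero, Real.log_div (ne_of_gt hQ) (ne_of_gt hη)]
          have : Real.log η ≤ Real.log (Q - f (m + 1)) :=
            Real.log_le_log hη (by linarith)
          linarith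
  linarith
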